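/- Let 1 ≤ q < ∞ and let X_N be an N-dimensional subspace of L_q(Ω) consisting of continuous functions satisfying ε_k(X_N^q, L_∞) ≤ B·(N/k)^{1/q} for all 1 ≤ k ≤ N, where B ≥ 1. Then for all k > N one has ε_k(X_N^q, L_∞) ≤ 6·B·2^{−k/N}. -/

import Mathlib

open MeasureTheory

noncomputable def supDist {Ω E : Type*} [NormedAddCommGroup E] (f g : Ω → E) : ℝ :=
  ⨆ x, ‖f x - g x‖

/-- Covering number: the minimal number of balls of radius `ε` (w.r.t. the distance `dst`)
with centers in `A` needed to cover `A`. -/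
noncomputable def coveringNum {α : Type*} (dst : α → α → ℝ) (ε : ℝ) (A : Set α) : ℕ :=
  sInf {n : ℕ | ∃ T : Finset α, ↑T ⊆ A ∧ T.card = n ∧ ∀ f ∈ A, ∃ g ∈ T, dst f g ≤ ε}

/-- The ε-entropy `H_ε(A) = log₂ N_ε(A)`. -/
noncomputable def metricEntropy {α : Type*} (dst : α → α → ℝ) (ε : ℝ) (A : Set α) : ℝ :=
  Real.logb 2 (coveringNum dst ε A)

/-- The entropy numbers `ε_k(A) = inf {ε > 0 : H_ε(A) ≤ k}`. -/
noncomputable def entropyNum {α : Type*} (dst : α → α → ℝ) (k : ℕ) (A : Set α) : ℝ :=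
  sInf {ε : ℝ | 0 < ε ∧ metricEntropy dst ε A ≤ k}
/-- The `L_q` norm `(∫_Ω ‖f‖^q dμ)^{1/q}`. -/
noncomputable def LqNorm {Ω : Type*} [MeasurableSpace Ω] {E : Type*} [NormedAddCommGroup E]
    (μ : MeasureTheory.Measure Ω) (q : ℝ) (f : Ω → E) : ℝ :=
  (∫ x, ‖f x‖ ^ q ∂μ) ^ (1 / q)
/-- `X_N^q`, the `L_q` unit ball of the subspace `V`. -/
noncomputable def unitBallLq {Ω : Type*} [MeasurableSpace Ω] (μ : MeasureTheory.Measure Ω)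
    (q : ℝ) (V : Submodule ℝ (Ω → ℝ)) : Set (Ω → ℝ) :=
  {f | f ∈ V ∧ LqNorm μ q f ≤ 1}

section Aux

open Metric Set

lemma packing_card_le {E : Type*} [NormedAddCommGroup E] [NormedSpace ℝ E]
    [FiniteDimensional ℝ E] (s : Finset E) (c : E) (R δ : ℝ) (hδ : 0 < δ) (hR : 0 ≤ R)
    (hball : ∀ x ∈ s, dist x c ≤ R)
    (hsep : ∀ x ∈ s, ∀ y ∈ s, x ≠ y → δ < dist x y) :
    (s.card : ℝ) ≤ ((2 * R + δ) / δ) ^ (Module.finrank ℝ E) := by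
  classical
  letI : MeasurableSpace E := borel E
  haveI : BorelSpace E := ⟨rfl⟩
  set n := Module.finrank ℝ E with hn
  set ν : Measure E := (Module.finBasis ℝ E).addHaar with hν
  set K : ENNReal := ν (Metric.closedBall (0:E) (1:ℝ)) with hK
  have hK0 : K ≠ 0 := (Metric.measure_closedBall_pos ν (0:E) one_pos).ne'
  have hKtop : K ≠ ⊤ := (measure_closedBall_lt_top (μ := ν) (x := (0:E)) (r := (1:ℝ))).ne
  have hdisj : Set.PairwiseDisjoint (↑s : Set E) (fun x => Metric.closedBall x (δ/2)) := by
    intro x hx y hy hxy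
    exact closedBall_disjoint_closedBall (by linarith [hsep x hx y hy hxy])
  have hsum : ν (⋃ x ∈ s, closedBall x (δ/2)) =
      (s.card : ENNReal) * (ENNReal.ofReal ((δ/2) ^ n) * K) := by
    rw [measure_biUnion_finset hdisj (fun b _ => measurableSet_closedBall)]
    rw [Finset.sum_congr rfl (fun x _ => Measure.addHaar_closedBall' ν x (half_pos hδ).le)]
    simp [Finset.sum_const, nsmul_eq_mul]
    rfl
  have hsub : (⋃ x ∈ s, closedBall x (δ/2)) ⊆ closedBall c (R + δ/2) := by
    intro y hy
    simp only [mem_iUnion, Finset.mem_coe] at hy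
    obtain ⟨x, hx, hyx⟩ := hy
    have := hball x hx
    simp only [mem_closedBall] at hyx ⊢
    calc dist y c ≤ dist y x + dist x c := dist_triangle _ _ _
      _ ≤ R + δ/2 := by linarith
  have hbig : ν (closedBall c (R + δ/2)) = ENNReal.ofReal ((R + δ/2) ^ n) * K :=
    Measure.addHaar_closedBall' ν c (by linarith)
  have hle : (s.card : ENNReal) * ENNReal.ofReal ((δ/2) ^ n) ≤
      ENNReal.ofReal ((R + δ/2) ^ n) := by
    have h1 : (s.card : ENNReal) * (ENNReal.ofReal ((δ/2) ^ n) * K) ≤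
        ENNReal.ofReal ((R + δ/2) ^ n) * K := by
      rw [← hsum, ← hbig]; exact measure_mono hsub
    rw [← mul_assoc] at h1
    exact (ENNReal.mul_le_mul_iff_left hK0 hKtop).mp h1
  have hδ2 : (0:ℝ) < (δ/2) ^ n := pow_pos (half_pos hδ) n
  have hreal : (s.card : ℝ) * ((δ/2) ^ n) ≤ (R + δ/2) ^ n := by
    have := hle
    rw [← ENNReal.ofReal_natCast s.card, ← ENNReal.ofReal_mul (by positivity)] at this
    exact (ENNReal.ofReal_le_ofReal_iff (by positivity)).mp this
  have h2 : (s.card : ℝ) ≤ ((R + δ/2) / (δ/2)) ^ n := by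
    rw [div_pow, le_div_iff₀ hδ2]
    exact hreal
  have h3 : ((R + δ/2) / (δ/2)) = (2*R + δ)/δ := by
    field_simp
  rwa [h3] at h2

lemma exists_sep_cover {E : Type*} [PseudoMetricSpace E] (A : Set E) (δ β : ℝ) (hδ : 0 < δ)
    (hM : ∀ s : Finset E, ↑s ⊆ A → (∀ x ∈ s, ∀ y ∈ s, x ≠ y → δ < dist x y) →
      (s.card : ℝ) ≤ β) :
    ∃ s : Finset E, ↑s ⊆ A ∧ (s.card : ℝ) ≤ β ∧ ∀ f ∈ A, ∃ g ∈ s, dist f g ≤ δ := by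
  classical
  set C : Set ℕ := {n | ∃ s : Finset E, ↑s ⊆ A ∧
    (∀ x ∈ s, ∀ y ∈ s, x ≠ y → δ < dist x y) ∧ s.card = n} with hC
  have h0 : (0:ℕ) ∈ C := ⟨∅, by simp, by simp, rfl⟩
  have hbdd : BddAbove C := by
    refine ⟨Nat.floor β, fun n hn => ?_⟩
    obtain ⟨s, hsA, hsep, hcard⟩ := hn
    exact Nat.le_floor (by rw [← hcard]; exact hM s hsA hsep)
  have hmem := Nat.sSup_mem ⟨0, h0⟩ hbdd
  obtain ⟨s, hsA, hsep, hcard⟩ := hmem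
  refine ⟨s, hsA, hcard ▸ hM s hsA hsep, ?_⟩
  intro f hf
  by_contra hcon
  push_neg at hcon
  have hfs : f ∉ s := fun hfs => by
    have := hcon f hfs
    simp at this
    linarith
  have hins : (sSup C + 1) ∈ C := by
    refine ⟨insert f s, ?_, ?_, ?_⟩
    · intro x hx
      simp only [Finset.coe_insert, Set.mem_insert_iff] at hx
      rcases hx with rfl | hx
      · exact hf
      · exact hsA hx
    · intro x hx y hy hxy
      simp only [Finset.mem_insert] at hx hy
      rcases hx with rfl | hx
      · rcases hy with rfl | hy
        · exact absurd rfl hxy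
        · exact hcon y hy
      · rcases hy with rfl | hy
        · rw [dist_comm]; exact hcon x hx
        · exact hsep x hx y hy hxy
    · rw [Finset.card_insert_of_notMem hfs, hcard]
  have := le_csSup hbdd hins
  omega

end Aux

set_option maxHeartbeats 1000000

/-- inequality (2.3): under the entropy assumption
`ε_k(X_N^q, L_∞) ≤ B (N/k)^{1/q}` for `1 ≤ k ≤ N`, one has
`ε_k(X_N^q, L_∞) ≤ 6 B 2^{-k/N}` for all `k > N`. -/
theorem statement5 (q : ℝ) (hq : 1 ≤ q) (d N : ℕ) (Ω : Set (Fin d → ℝ)) (hΩ : IsCompact Ω)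
    (μ : Measure Ω) [IsProbabilityMeasure μ]
    (V : Submodule ℝ (Ω → ℝ)) (hdim : Module.finrank ℝ V = N)
    (hcont : ∀ f ∈ V, Continuous f)
    (B : ℝ) (hB : 1 ≤ B)
    (hent : ∀ k : ℕ, 1 ≤ k → k ≤ N →
      entropyNum supDist k (unitBallLq μ q V) ≤ B * ((N : ℝ) / k) ^ (1 / q)) :
    ∀ k : ℕ, N < k →
      entropyNum supDist k (unitBallLq μ q V) ≤ 6 * B * 2 ^ (-(k : ℝ) / N) := by
  classical
  intro k hkN
  haveI : CompactSpace Ω := isCompact_iff_compactSpace.mp hΩ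
  set A : Set (Ω → ℝ) := unitBallLq μ q V with hA
  set S : Set ℝ := {ε : ℝ | 0 < ε ∧ metricEntropy supDist ε A ≤ (k:ℝ)} with hS
  have hq0 : 0 < q := lt_of_lt_of_le one_pos hq
  have hB0 : 0 < B := lt_of_lt_of_le one_pos hB
  have hRHS : (0:ℝ) < 6 * B * 2 ^ (-(k : ℝ) / N) := by positivity
  have hbddS : BddBelow S := ⟨0, fun x hx => le_of_lt hx.1⟩
  have hgoal : entropyNum supDist k A = sInf S := rfl
  -- the zero function is in A
  have h0A : (0 : Ω → ℝ) ∈ A := by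
    constructor
    · exact V.zero_mem
    · have : LqNorm μ q (0 : Ω → ℝ) = 0 := by
        simp only [LqNorm, Pi.zero_apply, norm_zero,
          Real.zero_rpow (ne_of_gt hq0), integral_zero]
        exact Real.zero_rpow (by positivity)
      rw [this]; norm_num
  -- helper: small entropy from covering number ≤ 1
  have hent_le_one : ∀ (r : ℝ) (j : ℕ), coveringNum supDist r A ≤ 1 →
      metricEntropy supDist r A ≤ (j:ℝ) := by
    intro r j h
    show Real.logb 2 (coveringNum supDist r A) ≤ (j:ℝ)
    rcases Nat.le_one_iff_eq_zero_or_eq_one.mp h with h' | h' <;>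
      simp [h', Real.logb_zero, Real.logb_one, Nat.cast_nonneg]
  by_cases hP : ∀ ε : ℝ, 0 < ε →
      ∃ T : Finset (Ω → ℝ), ↑T ⊆ A ∧ ∀ f ∈ A, ∃ g ∈ T, supDist f g ≤ ε
  swap
  · -- no finite cover at some scale: entropy numbers vanish
    push_neg at hP
    obtain ⟨ε₀, hε₀pos, hε₀⟩ := hP
    have hmem : ∀ ε' : ℝ, 0 < ε' → ε' ≤ ε₀ → ε' ∈ S := by
      intro ε' h1 h2
      refine ⟨h1, ?_⟩
      have hempty : {n : ℕ | ∃ T : Finset (Ω → ℝ), ↑T ⊆ A ∧ T.card = n ∧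
          ∀ f ∈ A, ∃ g ∈ T, supDist f g ≤ ε'} = ∅ := by
        ext n
        simp only [Set.mem_setOf_eq, Set.mem_empty_iff_false, iff_false]
        rintro ⟨T, hTA, -, hTcov⟩
        obtain ⟨f, hfA, hfT⟩ := hε₀ T hTA
        obtain ⟨g, hgT, hfg⟩ := hTcov f hfA
        exact absurd (hfT g hgT) (not_lt.mpr (hfg.trans h2))
      show Real.logb 2 (coveringNum supDist ε' A) ≤ (k:ℝ)
      rw [coveringNum, hempty, Nat.sInf_empty]
      simp [Real.logb_zero, Nat.cast_nonneg]
    have hle0 : sInf S ≤ 0 := by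
      refine le_of_forall_pos_le_add fun η hη => ?_
      have := csInf_le hbddS (hmem (min η ε₀) (lt_min hη hε₀pos) (min_le_right _ _))
      calc sInf S ≤ min η ε₀ := this
        _ ≤ η := min_le_left _ _
        _ = 0 + η := (zero_add η).symm
    exact hle0.trans hRHS.le
  -- From now on, finite covers exist at every scale.
  -- membership criterion for S
  have memS : ∀ r : ℝ, 0 < r →
      (∃ T : Finset (Ω → ℝ), ↑T ⊆ A ∧ ((T.card:ℝ) ≤ 2 ^ (k:ℝ)) ∧
        ∀ f ∈ A, ∃ g ∈ T, supDist f g ≤ r) → r ∈ S := by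
    rintro r hr ⟨T, hTA, hTc, hTcov⟩
    refine ⟨hr, ?_⟩
    have h1 : coveringNum supDist r A ≤ T.card := Nat.sInf_le ⟨T, hTA, rfl, hTcov⟩
    show Real.logb 2 (coveringNum supDist r A) ≤ (k:ℝ)
    by_cases h0 : coveringNum supDist r A = 0
    · simp [h0, Real.logb_zero, Nat.cast_nonneg]
    · have hpos : (0:ℝ) < (coveringNum supDist r A : ℝ) :=
        Nat.cast_pos.mpr (Nat.pos_of_ne_zero h0)
      rw [Real.logb_le_iff_le_rpow one_lt_two hpos]
      exact le_trans (Nat.cast_le.mpr h1) hTc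
  -- the linear embedding into C(Ω, ℝ)
  set Ψ : V →ₗ[ℝ] C(Ω, ℝ) :=
    { toFun := fun v => ⟨v.1, hcont v.1 v.2⟩
      map_add' := fun a b => by ext x; rfl
      map_smul' := fun c a => by ext x; rfl } with hΨdef
  have hΨinj : Function.Injective Ψ := by
    intro a b hab
    have : (a : Ω → ℝ) = (b : Ω → ℝ) := congrArg (fun φ : C(Ω, ℝ) => ⇑φ) hab
    exact Subtype.ext this
  have hdist : ∀ (f g : Ω → ℝ) (hf : f ∈ V) (hg : g ∈ V),
      supDist f g = dist (Ψ ⟨f, hf⟩) (Ψ ⟨g, hg⟩) := by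
    intro f g hf hg
    rw [dist_eq_norm, ContinuousMap.norm_eq_iSup_norm]
    show (⨆ x, ‖f x - g x‖) = ⨆ x, ‖(Ψ ⟨f, hf⟩ - Ψ ⟨g, hg⟩) x‖
    congr 1
  set W : Submodule ℝ C(Ω, ℝ) := LinearMap.range Ψ with hW
  have hdistW : ∀ x y : ↥W, dist x y = dist (x : C(Ω, ℝ)) (y : C(Ω, ℝ)) := by
    intro x y
    rw [dist_eq_norm, dist_eq_norm]
    rfl
  -- the L_q norm is dominated by the sup norm
  have hLq : ∀ (f : Ω → ℝ) (hf : f ∈ V), ‖Ψ ⟨f, hf⟩‖ ≤ 1 → f ∈ A := by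
    intro f hf hle
    refine ⟨hf, ?_⟩
    have hb : ∀ x, ‖f x‖ ≤ 1 := by
      intro x
      have := (Ψ ⟨f, hf⟩).norm_coe_le_norm x
      calc ‖f x‖ = ‖(Ψ ⟨f, hf⟩) x‖ := rfl
        _ ≤ ‖Ψ ⟨f, hf⟩‖ := (Ψ ⟨f, hf⟩).norm_coe_le_norm x
        _ ≤ 1 := hle
    have hcontf : Continuous fun x => ‖f x‖ ^ q := by
      exact ((hcont f hf).norm).rpow_const (fun x => Or.inr hq0.le)
    have hint : Integrable (fun x => ‖f x‖ ^ q) μ := by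
      refine ⟨hcontf.aestronglyMeasurable, ?_⟩
      refine HasFiniteIntegral.mono' (g := fun _ => (1:ℝ))
        (hasFiniteIntegral_const 1) ?_
      filter_upwards with x
      rw [Real.norm_eq_abs, abs_of_nonneg (Real.rpow_nonneg (norm_nonneg _) q)]
      exact Real.rpow_le_one (norm_nonneg _) (hb x) hq0.le
    have hI : (∫ x, ‖f x‖ ^ q ∂μ) ≤ 1 := by
      calc (∫ x, ‖f x‖ ^ q ∂μ) ≤ ∫ _, (1:ℝ) ∂μ := by
            refine integral_mono hint (integrable_const 1) fun x => ?_
            exact Real.rpow_le_one (norm_nonneg _) (hb x) hq0.le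
        _ = 1 := by simp
    show LqNorm μ q f ≤ 1
    rw [LqNorm]
    exact Real.rpow_le_one (integral_nonneg fun x => Real.rpow_nonneg (norm_nonneg _) q)
      hI (by positivity)
  by_cases hfdV : FiniteDimensional ℝ V
  swap
  · -- infinite-dimensional case: contradiction with total boundedness
    exfalso
    have hWfd : ¬ FiniteDimensional ℝ ↥W := by
      intro h
      exact hfdV (Module.Finite.equiv (LinearEquiv.ofInjective Ψ hΨinj).symm)
    obtain ⟨gs, hgR, hgsep⟩ :=
      exists_seq_norm_le_one_le_norm_sub' (𝕜 := ℝ) (E := ↥W) (c := (2:ℝ))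
        (by rw [Real.norm_eq_abs]; norm_num) (R := 3)
        (by rw [Real.norm_eq_abs]; norm_num) hWfd
    have h3n : ‖(3⁻¹:ℝ)‖ = 3⁻¹ := by rw [Real.norm_eq_abs]; norm_num
    have hfn : ∀ n, ∃ (f : Ω → ℝ) (hf : f ∈ V), Ψ ⟨f, hf⟩ = ((gs n : C(Ω, ℝ))) := by
      intro n
      obtain ⟨v, hv⟩ := (gs n).2
      exact ⟨v.1, v.2, hv⟩
    choose f hfV hfΨ using hfn
    set F : ℕ → (Ω → ℝ) := fun n => (3⁻¹:ℝ) • f n with hF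
    have hFV : ∀ n, F n ∈ V := fun n => V.smul_mem _ (hfV n)
    have hΨF : ∀ n, Ψ ⟨F n, hFV n⟩ = (3⁻¹:ℝ) • ((gs n : C(Ω, ℝ))) := by
      intro n
      rw [← hfΨ n, ← _root_.map_smul]
      rfl
    have hgnorm : ∀ n, ‖((gs n : C(Ω, ℝ)))‖ ≤ 3 := fun n => hgR n
    have hFA : ∀ n, F n ∈ A := by
      intro n
      refine hLq (F n) (hFV n) ?_
      have hns := norm_smul ((3:ℝ)⁻¹) ((gs n : C(Ω, ℝ)))
      rw [hΨF n, hns, h3n]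
      have := hgnorm n
      have h0 := norm_nonneg ((gs n : C(Ω, ℝ)))
      nlinarith
    have hFsep : ∀ m n : ℕ, m ≠ n → (3⁻¹:ℝ) ≤ supDist (F m) (F n) := by
      intro m n hmn
      have hns := norm_smul ((3:ℝ)⁻¹) (((gs m : C(Ω, ℝ))) - ((gs n : C(Ω, ℝ))))
      rw [hdist (F m) (F n) (hFV m) (hFV n), dist_eq_norm, hΨF m, hΨF n, ← smul_sub,
        hns, h3n]
      have hsep : (1:ℝ) ≤ ‖((gs m : C(Ω, ℝ))) - ((gs n : C(Ω, ℝ)))‖ := hgsep hmn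
      nlinarith
    obtain ⟨T, hTA, hTcov⟩ := hP (1/7) (by norm_num)
    have hTne : ∀ n, ∃ g : {g // g ∈ T}, supDist (F n) g.1 ≤ 1/7 := by
      intro n
      obtain ⟨g, hg, h⟩ := hTcov (F n) (hFA n)
      exact ⟨⟨g, hg⟩, h⟩
    choose gT hgd using hTne
    haveI : Fintype {g // g ∈ T} := FinsetCoe.fintype T
    haveI : Finite {g // g ∈ T} := Finite.of_fintype _
    obtain ⟨m, n, hmn, heq⟩ := Finite.exists_ne_map_eq_of_infinite gT
    have hd1 := hgd m
    have hd2 : supDist (F n) (gT m).1 ≤ 1/7 := by rw [heq]; exact hgd n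
    have hgV : (gT m).1 ∈ V := (hTA (gT m).2).1
    have htri : supDist (F m) (F n) ≤ supDist (F m) (gT m).1 + supDist (F n) (gT m).1 := by
      rw [hdist (F m) (F n) (hFV m) (hFV n), hdist (F m) _ (hFV m) hgV,
        hdist (F n) _ (hFV n) hgV]
      exact dist_triangle_right _ _ _
    have hlow := hFsep m n hmn
    linarith
  by_cases hN0 : N = 0
  · -- N = 0 and finite-dimensional: V is trivial
    have hVz : ∀ f ∈ V, f = (0 : Ω → ℝ) := by
      intro f hf
      by_contra hne
      haveI : Nontrivial ↥V := ⟨⟨⟨f, hf⟩, 0, fun h => hne (congrArg Subtype.val h)⟩⟩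
      have h1 : 0 < Module.finrank ℝ ↥V := Module.finrank_pos
      rw [hdim, hN0] at h1
      exact lt_irrefl 0 h1
    have hmem : ∀ ε : ℝ, 0 < ε → ε ∈ S := by
      intro ε hε
      refine ⟨hε, ?_⟩
      refine hent_le_one ε k (Nat.sInf_le ⟨{0}, ?_, Finset.card_singleton 0, ?_⟩)
      · simp only [Finset.coe_singleton, Set.singleton_subset_iff]
        exact h0A
      · intro g hg
        refine ⟨0, Finset.mem_singleton_self 0, ?_⟩
        rw [hVz g hg.1]
        show (⨆ z, ‖(0:Ω→ℝ) z - (0:Ω→ℝ) z‖) ≤ ε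
        refine Real.iSup_le (fun z => by simpa using hε.le) hε.le
    have hle0 : sInf S ≤ 0 := by
      refine le_of_forall_pos_le_add fun η hη => ?_
      have := csInf_le hbddS (hmem η hη)
      linarith
    exact hle0.trans hRHS.le
  -- main case : 1 ≤ N < k, V finite-dimensional
  haveI hWfd : FiniteDimensional ℝ ↥W := Module.Finite.equiv (LinearEquiv.ofInjective Ψ hΨinj)
  have hrankW : Module.finrank ℝ ↥W = N := by
    rw [← hdim]
    exact (LinearEquiv.ofInjective Ψ hΨinj).symm.finrank_eq
  have hNpos : (0:ℝ) < N := Nat.cast_pos.mpr (Nat.pos_of_ne_zero hN0)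
  set t : ℝ := 2 ^ ((k:ℝ)/(N:ℝ)) with ht
  have htpos : 0 < t := Real.rpow_pos_of_pos two_pos _
  have ht2 : 2 < t := by
    rw [ht]
    calc (2:ℝ) = 2 ^ (1:ℝ) := (Real.rpow_one 2).symm
      _ < 2 ^ ((k:ℝ)/N) := by
          rw [Real.rpow_lt_rpow_left_iff one_lt_two, lt_div_iff₀ hNpos]
          simpa using (Nat.cast_lt.mpr hkN : (N:ℝ) < k)
  have htN : t ^ N = (2:ℝ) ^ (k:ℝ) := by
    rw [ht, ← Real.rpow_natCast (2 ^ ((k:ℝ)/(N:ℝ))) N, ← Real.rpow_mul (by norm_num),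
      div_mul_cancel₀ _ (ne_of_gt hNpos)]
  have hRHSeq : 6 * B * (2:ℝ) ^ (-(k:ℝ)/(N:ℝ)) = 6 * B / t := by
    rw [neg_div, Real.rpow_neg (by norm_num : (0:ℝ) ≤ 2), ht]
    ring
  set SN : Set ℝ := {ε : ℝ | 0 < ε ∧ metricEntropy supDist ε A ≤ (N:ℝ)} with hSN
  obtain ⟨T₁, hT₁A, hT₁cov⟩ := hP 1 one_pos
  have hT₁ne : T₁.Nonempty := by
    obtain ⟨g, hg, -⟩ := hT₁cov 0 h0A
    exact ⟨g, hg⟩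
  have hsupnn : ∀ f g : Ω → ℝ, 0 ≤ supDist f g := fun f g =>
    Real.iSup_nonneg fun z => norm_nonneg _
  set R : ℝ := 1 + T₁.sup' hT₁ne (fun g => supDist g 0) with hRdef
  have hRpos : 0 < R := by
    obtain ⟨g₀, hg₀⟩ := hT₁ne
    have h1 := Finset.le_sup' (fun g => supDist g 0) hg₀
    have h2 := hsupnn g₀ 0
    rw [hRdef]
    linarith
  have hSNne : SN.Nonempty := by
    refine ⟨R, hRpos, ?_⟩
    refine hent_le_one R N (Nat.sInf_le ⟨{0}, ?_, Finset.card_singleton 0, ?_⟩)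
    · simp only [Finset.coe_singleton, Set.singleton_subset_iff]
      exact h0A
    · intro f hf
      refine ⟨0, Finset.mem_singleton_self 0, ?_⟩
      obtain ⟨g, hgT, hfg⟩ := hT₁cov f hf
      have htri : supDist f 0 ≤ supDist f g + supDist g 0 := by
        rw [hdist f 0 hf.1 V.zero_mem, hdist f g hf.1 (hT₁A hgT).1,
          hdist g 0 (hT₁A hgT).1 V.zero_mem]
        exact dist_triangle _ _ _
      have h2 := Finset.le_sup' (fun g => supDist g 0) hgT
      rw [hRdef]
      linarith
  have hentN : sInf SN ≤ B := by
    have h := hent N (Nat.one_le_iff_ne_zero.mpr hN0) le_rfl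
    have h2 : ((N:ℝ)/(N:ℝ)) = 1 := div_self (ne_of_gt hNpos)
    rw [h2, Real.one_rpow, mul_one] at h
    exact h
  have getEps : ∀ η₂ : ℝ, 0 < η₂ → ∃ ε : ℝ, 0 < ε ∧ ε < B * (1 + η₂) ∧
      metricEntropy supDist ε A ≤ (N:ℝ) := by
    intro η₂ hη₂
    have hlt : sInf SN < B * (1 + η₂) := lt_of_le_of_lt hentN (by nlinarith)
    obtain ⟨ε, hεS, hεlt⟩ := exists_lt_of_csInf_lt hSNne hlt
    exact ⟨ε, hεS.1, hεlt, hεS.2⟩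
  have amp : ∀ ε : ℝ, 0 < ε → metricEntropy supDist ε A ≤ (N:ℝ) → 6 ≤ t →
      ∃ T' : Finset (Ω → ℝ), ↑T' ⊆ A ∧ ((T'.card:ℝ) ≤ 2 ^ (k:ℝ)) ∧
        ∀ f ∈ A, ∃ g ∈ T', supDist f g ≤ (6/t) * ε := by
    intro ε hε hεent ht6
    set θ : ℝ := 6/t with hθ
    have hθpos : 0 < θ := by positivity
    have hCne : {n : ℕ | ∃ T : Finset (Ω → ℝ), ↑T ⊆ A ∧ T.card = n ∧
        ∀ f ∈ A, ∃ g ∈ T, supDist f g ≤ ε}.Nonempty := by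
      obtain ⟨T, h1, h2⟩ := hP ε hε
      exact ⟨T.card, T, h1, rfl, h2⟩
    obtain ⟨T₀, hT₀A, hT₀card, hT₀cov⟩ := Nat.sInf_mem hCne
    have hT₀card' : T₀.card = coveringNum supDist ε A := hT₀card
    have hcard0 : T₀.card ≠ 0 := by
      intro h
      rw [Finset.card_eq_zero] at h
      subst h
      obtain ⟨g, hg, -⟩ := hT₀cov 0 h0A
      simp at hg
    have hcN : ((T₀.card):ℝ) ≤ 2 ^ ((N:ℕ):ℝ) := by
      have hpos : (0:ℝ) < (T₀.card:ℝ) := Nat.cast_pos.mpr (Nat.pos_of_ne_zero hcard0)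
      have hlogb : Real.logb 2 (T₀.card) ≤ (N:ℝ) := by
        rw [hT₀card']
        exact hεent
      rwa [Real.logb_le_iff_le_rpow one_lt_two hpos] at hlogb
    have key : ∀ g ∈ T₀, ∃ u : Finset (Ω → ℝ), ↑u ⊆ A ∧
        ((u.card:ℝ) ≤ ((2 + θ)/θ) ^ N) ∧
        ∀ f ∈ A, supDist f g ≤ ε → ∃ h ∈ u, supDist f h ≤ θ * ε := by
      intro g hgT₀
      have hgA : g ∈ A := hT₀A hgT₀
      have hgV : g ∈ V := hgA.1
      set xg : ↥W := ⟨Ψ ⟨g, hgV⟩, LinearMap.mem_range_self _ _⟩ with hxg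
      set D : Set ↥W := {z : ↥W | (⇑(z : C(Ω, ℝ)) ∈ A) ∧ dist z xg ≤ ε} with hD
      have hM : ∀ s : Finset ↥W, ↑s ⊆ D →
          (∀ z ∈ s, ∀ y ∈ s, z ≠ y → θ * ε < dist z y) →
          ((s.card:ℝ) ≤ ((2+θ)/θ) ^ N) := by
        intro s hsD hsep
        have hpack := packing_card_le s xg ε (θ*ε) (by positivity) hε.le
          (fun z hz => (hsD hz).2) hsep
        rw [hrankW] at hpack
        have heq : (2*ε + θ*ε)/(θ*ε) = (2+θ)/θ := by
          field_simp
        rwa [heq] at hpack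
      obtain ⟨s, hsD, hscard, hscov⟩ := exists_sep_cover D (θ*ε) _ (by positivity) hM
      refine ⟨s.image (fun z : ↥W => ⇑(z : C(Ω, ℝ))), ?_, ?_, ?_⟩
      · intro f hf
        simp only [Finset.coe_image, Set.mem_image, Finset.mem_coe] at hf
        obtain ⟨z, hz, rfl⟩ := hf
        exact (hsD hz).1
      · calc ((s.image _).card : ℝ) ≤ (s.card : ℝ) := Nat.cast_le.mpr Finset.card_image_le
          _ ≤ _ := hscard
      · intro f hfA' hfg
        have hfV : f ∈ V := hfA'.1
        set xf : ↥W := ⟨Ψ ⟨f, hfV⟩, LinearMap.mem_range_self _ _⟩ with hxf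
        have hxfD : xf ∈ D := by
          constructor
          · exact hfA'
          · rw [hdistW xf xg]
            rw [hdist f g hfV hgV] at hfg
            exact hfg
        obtain ⟨y, hys, hxy⟩ := hscov xf hxfD
        refine ⟨⇑(y : C(Ω, ℝ)), Finset.mem_image_of_mem _ hys, ?_⟩
        have hyA : (⇑(y : C(Ω, ℝ))) ∈ A := (hsD hys).1
        have hΨy : Ψ ⟨⇑(y : C(Ω, ℝ)), hyA.1⟩ = (y : C(Ω, ℝ)) := by
          apply ContinuousMap.ext
          intro z
          rfl
        have hfy : supDist f (⇑(y : C(Ω, ℝ))) = dist xf y := by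
          rw [hdist f _ hfV hyA.1, hΨy, hdistW xf y]
        rw [hfy]
        exact hxy
    choose u hu1 hu2 hu3 using key
    refine ⟨T₀.attach.biUnion (fun g => u g.1 g.2), ?_, ?_, ?_⟩
    · intro f hf
      simp only [Finset.coe_biUnion, Set.mem_iUnion, Finset.mem_coe] at hf
      obtain ⟨g, -, hfu⟩ := hf
      exact hu1 g.1 g.2 hfu
    · calc ((T₀.attach.biUnion (fun g => u g.1 g.2)).card : ℝ)
          ≤ ∑ g ∈ T₀.attach, ((u g.1 g.2).card : ℝ) := by
            have h := Finset.card_biUnion_le (s := T₀.attach) (t := fun g => u g.1 g.2)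
            calc ((T₀.attach.biUnion (fun g => u g.1 g.2)).card : ℝ)
                ≤ ((∑ g ∈ T₀.attach, (u g.1 g.2).card : ℕ) : ℝ) := Nat.cast_le.mpr h
              _ = ∑ g ∈ T₀.attach, ((u g.1 g.2).card : ℝ) := Nat.cast_sum _ _
        _ ≤ ∑ g ∈ T₀.attach, ((2 + θ)/θ) ^ N :=
            Finset.sum_le_sum fun g _ => hu2 g.1 g.2
        _ = (T₀.card : ℝ) * ((2 + θ)/θ) ^ N := by
            rw [Finset.sum_const, Finset.card_attach, nsmul_eq_mul]
        _ ≤ 2 ^ ((N:ℕ):ℝ) * ((2 + θ)/θ) ^ N :=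
            mul_le_mul_of_nonneg_right hcN (by positivity)
        _ = (2 * ((2 + θ)/θ)) ^ N := by
            rw [Real.rpow_natCast, mul_pow]
        _ ≤ t ^ N := by
            refine pow_le_pow_left₀ (by positivity) ?_ N
            have hθval : (2 + θ)/θ = t/3 + 1 := by
              rw [hθ]
              field_simp
              ring
            rw [hθval]
            linarith
        _ = 2 ^ (k:ℝ) := htN
    · intro f hf
      obtain ⟨g, hgT, hfg⟩ := hT₀cov f hf
      obtain ⟨h, hh, hfh⟩ := hu3 g hgT f hf hfg
      exact ⟨h, Finset.mem_biUnion.mpr ⟨⟨g, hgT⟩, Finset.mem_attach _ _, hh⟩, hfh⟩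
  -- endgame
  rw [hgoal, hRHSeq]
  refine le_of_forall_pos_le_add fun η hη => ?_
  by_cases ht6 : 6 ≤ t
  · obtain ⟨ε, hεpos, hεlt, hεent⟩ := getEps (η*t/(6*B)) (by positivity)
    obtain ⟨T', hT'A, hT'card, hT'cov⟩ := amp ε hεpos hεent ht6
    have hθε : (6/t)*ε ≤ 6*B/t + η := by
      have h1 : (6/t)*ε ≤ (6/t)*(B*(1+η*t/(6*B))) :=
        mul_le_mul_of_nonneg_left hεlt.le (by positivity)
      have h2 : (6/t)*(B*(1+η*t/(6*B))) = 6*B/t + η := by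
        field_simp
      linarith
    refine csInf_le hbddS (memS (6*B/t + η) (by positivity) ⟨T', hT'A, hT'card, ?_⟩)
    intro f hf
    obtain ⟨g, hg, hfg⟩ := hT'cov f hf
    exact ⟨g, hg, hfg.trans hθε⟩
  · push_neg at ht6
    have h6t : 1 < 6/t := (one_lt_div htpos).mpr ht6
    obtain ⟨ε, hεpos, hεlt, hεent⟩ := getEps (6/t - 1) (by linarith)
    have hεS : ε ∈ S := ⟨hεpos, hεent.trans (Nat.cast_le.mpr hkN.le)⟩
    have hεlt2 : ε < 6*B/t := by
      have h2 : B * (1 + (6/t - 1)) = 6*B/t := by ring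
      linarith
    have := csInf_le hbddS hεS
    linarith
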